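/- Fix β ∈ ℝ. For every Υ ∈ B↗([0,L(β)]²), one has J̃(u_β,Υ) ≤ ∫_0^{L(β)} 2/(1 − βt²) dt = 𝓛(β). -/

import Mathlib

open MeasureTheory

/-- A monotone partition of the box `[a1,a2]×[b1,b2]` all of whose points lie on `Υ`. -/
def IsPartitionOn (a1 a2 b1 b2 : ℝ) (Υ : Set (ℝ × ℝ)) (n : ℕ) (x y : Fin (n + 1) → ℝ) : Prop :=
  Monotone x ∧ Monotone y ∧ x 0 = a1 ∧ y 0 = b1 ∧ x (Fin.last n) = a2 ∧ y (Fin.last n) = b2 ∧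
    ∀ k : Fin (n + 1), (x k, y k) ∈ Υ

/-- `J̃(u,P) = 2 Σ_k (∫_{x_k}^{x_{k+1}} ∫_{y_k}^{y_{k+1}} u(x,y) dx dy)^{1/2}`. -/
noncomputable def Jpart (u : ℝ × ℝ → ℝ) (n : ℕ) (x y : Fin (n + 1) → ℝ) : ℝ :=
  2 * ∑ k : Fin n,
    Real.sqrt (∫ s in (x k.castSucc)..(x k.succ), ∫ t in (y k.castSucc)..(y k.succ), u (s, t))

/-- `J̃(u,Υ) = lim_{ε→0} inf {J̃(u,P) : P a partition with points on Υ, mesh < ε}`. -/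
noncomputable def Jcurve (a1 a2 b1 b2 : ℝ) (u : ℝ × ℝ → ℝ) (Υ : Set (ℝ × ℝ)) : ℝ :=
  ⨆ ε : {e : ℝ // 0 < e},
    sInf {r : ℝ | ∃ (n : ℕ) (x y : Fin (n + 1) → ℝ),
      IsPartitionOn a1 a2 b1 b2 Υ n x y ∧
      (∀ k : Fin n, x k.succ - x k.castSucc < (ε : ℝ) ∧ y k.succ - y k.castSucc < (ε : ℝ)) ∧
      r = Jpart u n x y}

/-- `B↗`: connected subsets of the box containing both corners, monotone in the sense that
`(x_1-x_2)(y_1-y_2) ≥ 0` for any two points. -/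
def Bup (a1 a2 b1 b2 : ℝ) : Set (Set (ℝ × ℝ)) :=
  {Υ | Υ ⊆ Set.Icc (a1, b1) (a2, b2) ∧ IsConnected Υ ∧ (a1, b1) ∈ Υ ∧ (a2, b2) ∈ Υ ∧
    ∀ p ∈ Υ, ∀ q ∈ Υ, 0 ≤ (p.1 - q.1) * (p.2 - q.2)}

/-- `L(β) = ((1-e^{-β})/β)^{1/2}` for `β ≠ 0`, `L(0) = 1`. -/
noncomputable def Lb (β : ℝ) : ℝ :=
  if β = 0 then 1 else Real.sqrt ((1 - Real.exp (-β)) / β)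

/-- The density `u_β(x,y) = 1_{[0,L(β)]²}(x,y) (1-βxy)^{-2}`. -/
noncomputable def uBeta (β : ℝ) : ℝ × ℝ → ℝ :=
  (Set.Icc (0, 0) (Lb β, Lb β)).indicator fun p => ((1 - β * p.1 * p.2) ^ 2)⁻¹

/-- The limit function 𝓛(β). -/
noncomputable def calL (β : ℝ) : ℝ :=
  if 0 < β then 2 / Real.sqrt β * Real.arsinh (Real.sqrt (Real.exp β - 1))
  else if β < 0 then 2 / Real.sqrt |β| * Real.arcsin (Real.sqrt (1 - Real.exp β))
  else 2

namespace JAux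


noncomputable def mb (β : ℝ) : ℝ := min 1 (Real.exp (-β))

lemma mb_pos (β : ℝ) : 0 < mb β := lt_min one_pos (Real.exp_pos _)

lemma Lb_nonneg (β : ℝ) : 0 ≤ Lb β := by
  unfold Lb; split
  · norm_num
  · exact Real.sqrt_nonneg _

lemma Lb_pos (β : ℝ) : 0 < Lb β := by
  unfold Lb; split
  · norm_num
  · rename_i h
    apply Real.sqrt_pos.2
    rcases lt_or_gt_of_ne h with h' | h'
    · have h1 : (1:ℝ) < Real.exp (-β) := by
        rw [show (1:ℝ) = Real.exp 0 by simp]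
        exact Real.exp_lt_exp.2 (by linarith)
      apply div_pos_of_neg_of_neg <;> linarith
    · have h1 : Real.exp (-β) < 1 := by
        rw [show (1:ℝ) = Real.exp 0 by simp]
        exact Real.exp_lt_exp.2 (by linarith)
      apply div_pos <;> linarith

lemma key_denom (β : ℝ) {w : ℝ} (hw0 : 0 ≤ w) (hw : w ≤ Lb β * Lb β) :
    mb β ≤ 1 - β * w := by
  rcases le_or_gt β 0 with hβ | hβ
  · have h1 : β * w ≤ 0 := mul_nonpos_of_nonpos_of_nonneg hβ hw0
    have := min_le_left (1:ℝ) (Real.exp (-β))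
    unfold mb; linarith
  · have hq : 0 ≤ (1 - Real.exp (-β)) / β := by
      have h1 : Real.exp (-β) < 1 := by
        rw [show (1:ℝ) = Real.exp 0 by simp]
        exact Real.exp_lt_exp.2 (by linarith)
      apply div_nonneg <;> linarith
    have hL2 : β * (Lb β * Lb β) = 1 - Real.exp (-β) := by
      unfold Lb; rw [if_neg hβ.ne', Real.mul_self_sqrt hq]
      field_simp
    have h2 : β * w ≤ 1 - Real.exp (-β) := by
      calc β * w ≤ β * (Lb β * Lb β) := by
            exact mul_le_mul_of_nonneg_left hw hβ.le
        _ = 1 - Real.exp (-β) := hL2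
    have := min_le_right (1:ℝ) (Real.exp (-β))
    unfold mb; linarith

/-- denominator positivity on `[0, L]` for squares -/
lemma denom_pos (β : ℝ) {τ : ℝ} (h0 : 0 ≤ τ) (h1 : τ ≤ Lb β) :
    0 < 1 - β * τ ^ 2 := by
  have := key_denom β (w := τ ^ 2) (by positivity)
    (by rw [sq]; exact mul_le_mul h1 h1 h0 (Lb_nonneg β))
  linarith [mb_pos β]

lemma two_sqrt_le {p q : ℝ} (hp : 0 ≤ p) (hq : 0 ≤ q) :
    2 * Real.sqrt (p * q) ≤ p + q := by
  have h1 : Real.sqrt (p * q) ≤ (p + q) / 2 := by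
    rw [show (p+q)/2 = Real.sqrt (((p+q)/2)^2) from (Real.sqrt_sq (by positivity)).symm]
    exact Real.sqrt_le_sqrt (by nlinarith [sq_nonneg (p-q)])
  linarith

/-- key AM-GM-for-sqrt inequality -/
lemma sqrt_key {x1 x2 y1 y2 : ℝ} (hx1 : 0 ≤ x1) (hy1 : 0 ≤ y1)
    (hx : x1 ≤ x2) (hy : y1 ≤ y2) :
    Real.sqrt ((x2 - x1) * (y2 - y1)) ≤ Real.sqrt (x2 * y2) - Real.sqrt (x1 * y1) := by
  rw [le_sub_iff_add_le, add_comm]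
  have hs : 0 ≤ Real.sqrt (x1 * y1) + Real.sqrt ((x2 - x1) * (y2 - y1)) := by positivity
  rw [Real.le_sqrt hs (by nlinarith)]
  have h1 : Real.sqrt (x1 * y1) ^ 2 = x1 * y1 := Real.sq_sqrt (by positivity)
  have h2 : Real.sqrt ((x2 - x1) * (y2 - y1)) ^ 2 = (x2 - x1) * (y2 - y1) :=
    Real.sq_sqrt (by nlinarith)
  have h3 : Real.sqrt (x1 * y1) * Real.sqrt ((x2 - x1) * (y2 - y1))
      = Real.sqrt ((x1 * (y2 - y1)) * (y1 * (x2 - x1))) := by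
    rw [← Real.sqrt_mul (by positivity)]
    ring_nf
  have h4 : 2 * Real.sqrt ((x1 * (y2 - y1)) * (y1 * (x2 - x1)))
      ≤ x1 * (y2 - y1) + y1 * (x2 - x1) := two_sqrt_le (by nlinarith) (by nlinarith)
  nlinarith [Real.sqrt_nonneg (x1*y1), Real.sqrt_nonneg ((x2-x1)*(y2-y1))]


lemma f_intOn (β : ℝ) {a b : ℝ} (ha : a ∈ Set.Icc 0 (Lb β)) (hb : b ∈ Set.Icc 0 (Lb β)) :
    IntervalIntegrable (fun τ : ℝ => 2 / (1 - β * τ ^ 2)) volume a b := by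
  apply ContinuousOn.intervalIntegrable
  have hsub : Set.uIcc a b ⊆ Set.Icc 0 (Lb β) := by
    rw [← Set.uIcc_of_le (Lb_nonneg β)]
    exact Set.uIcc_subset_uIcc (by rwa [Set.uIcc_of_le (Lb_nonneg β)])
      (by rwa [Set.uIcc_of_le (Lb_nonneg β)])
  apply ContinuousOn.div continuousOn_const
  · fun_prop
  · intro τ hτ
    have h := hsub hτ
    exact (denom_pos β h.1 h.2).ne'

set_option maxHeartbeats 2000000 in
/-- Per-rectangle estimate: twice the square root of the mass of `u_β` on the rectangle
`[x1,x2]×[y1,y2]` is bounded by the (slightly inflated) diagonal integral between the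
geometric means. -/
lemma rect_bound (β : ℝ) {ε x1 x2 y1 y2 : ℝ}
    (hx1 : 0 ≤ x1) (hy1 : 0 ≤ y1) (hx12 : x1 ≤ x2) (hy12 : y1 ≤ y2)
    (hx2L : x2 ≤ Lb β) (hy2L : y2 ≤ Lb β)
    (hkx : x2 - x1 ≤ ε) (hky : y2 - y1 ≤ ε) :
    2 * Real.sqrt (∫ s in x1..x2, ∫ t in y1..y2, uBeta β (s, t))
      ≤ ∫ τ in Real.sqrt (x1 * y1)..Real.sqrt (x2 * y2),
          (1 + 2 * Lb β * |β| / mb β * ε) * (2 / (1 - β * τ ^ 2)) := by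
  set L := Lb β with hLdef
  set m := mb β with hmdef
  have hm0 : 0 < m := mb_pos β
  have hL0 : 0 ≤ L := Lb_nonneg β
  have hx2 : 0 ≤ x2 := le_trans hx1 hx12
  have hy2 : 0 ≤ y2 := le_trans hy1 hy12
  have hx1L : x1 ≤ L := le_trans hx12 hx2L
  have hy1L : y1 ≤ L := le_trans hy12 hy2L
  have hε0 : 0 ≤ ε := le_trans (by linarith) hkx
  set Cst : ℝ := 2 * L * |β| / m with hCstdef
  have hCst0 : 0 ≤ Cst := by positivity
  set w : ℝ := if 0 ≤ β then x2 * y2 else x1 * y1 with hw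
  have hw0 : 0 ≤ w := by
    rw [hw]; split
    · exact mul_nonneg hx2 hy2
    · exact mul_nonneg hx1 hy1
  have hwle : w ≤ L * L := by
    rw [hw]; split
    · exact mul_le_mul hx2L hy2L hy2 hL0
    · exact mul_le_mul hx1L hy1L hy1 hL0
  set P : ℝ := 1 - β * w with hPdef
  have hPm : m ≤ P := key_denom β hw0 hwle
  have hP0 : 0 < P := lt_of_lt_of_le hm0 hPm
  -- pointwise bound on u over the rectangle
  have hub : ∀ s t : ℝ, x1 ≤ s → s ≤ x2 → y1 ≤ t → t ≤ y2 →
      ‖uBeta β (s, t)‖ ≤ P⁻¹ ^ 2 := by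
    intro s t hs1 hs2 ht1 ht2
    have hs0 : 0 ≤ s := le_trans hx1 hs1
    have ht0 : 0 ≤ t := le_trans hy1 ht1
    unfold uBeta
    rw [Set.indicator_apply]
    split
    · have hst : β * (s * t) ≤ β * w := by
        rw [hw]
        rcases le_or_gt 0 β with hb | hb
        · rw [if_pos hb]
          exact mul_le_mul_of_nonneg_left
            (mul_le_mul hs2 ht2 ht0 hx2) hb
        · rw [if_neg (not_le.2 hb)]
          exact mul_le_mul_of_nonpos_left
            (mul_le_mul hs1 ht1 hy1 hs0) hb.le
      have h1 : P ≤ 1 - β * s * t := by rw [hPdef, mul_assoc]; linarith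
      have h2 : (0:ℝ) < 1 - β * s * t := lt_of_lt_of_le hP0 h1
      rw [Real.norm_eq_abs, abs_of_nonneg (by positivity), inv_pow]
      exact inv_anti₀ (by positivity) (by nlinarith)
    · simp only [Real.norm_eq_abs, abs_zero]
      positivity
  -- bound on the double integral
  have hI : ‖∫ s in x1..x2, ∫ t in y1..y2, uBeta β (s, t)‖
      ≤ P⁻¹ ^ 2 * (y2 - y1) * (x2 - x1) := by
    have houter : ∀ s ∈ Set.uIoc x1 x2,
        ‖∫ t in y1..y2, uBeta β (s, t)‖ ≤ P⁻¹ ^ 2 * (y2 - y1) := by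
      intro s hs
      rw [Set.uIoc_of_le hx12] at hs
      have h := intervalIntegral.norm_integral_le_of_norm_le_const
        (C := P⁻¹ ^ 2) (f := fun t => uBeta β (s, t)) (a := y1) (b := y2) ?_
      · rwa [abs_of_nonneg (by linarith)] at h
      · intro t ht
        rw [Set.uIoc_of_le hy12] at ht
        exact hub s t hs.1.le hs.2 ht.1.le ht.2
    have h := intervalIntegral.norm_integral_le_of_norm_le_const
      (C := P⁻¹ ^ 2 * (y2 - y1)) (f := fun s => ∫ t in y1..y2, uBeta β (s, t))
      (a := x1) (b := x2) houter
    rwa [abs_of_nonneg (by linarith)] at h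
  have hIs : Real.sqrt (∫ s in x1..x2, ∫ t in y1..y2, uBeta β (s, t))
      ≤ P⁻¹ * (Real.sqrt (x2 * y2) - Real.sqrt (x1 * y1)) := by
    have h1 : (∫ s in x1..x2, ∫ t in y1..y2, uBeta β (s, t))
        ≤ P⁻¹ ^ 2 * ((x2 - x1) * (y2 - y1)) :=
      calc (∫ s in x1..x2, ∫ t in y1..y2, uBeta β (s, t))
          ≤ P⁻¹ ^ 2 * (y2 - y1) * (x2 - x1) := le_trans (le_abs_self _) hI
        _ = P⁻¹ ^ 2 * ((x2 - x1) * (y2 - y1)) := by ring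
    calc Real.sqrt (∫ s in x1..x2, ∫ t in y1..y2, uBeta β (s, t))
        ≤ Real.sqrt (P⁻¹ ^ 2 * ((x2 - x1) * (y2 - y1))) := Real.sqrt_le_sqrt h1
      _ = P⁻¹ * Real.sqrt ((x2 - x1) * (y2 - y1)) := by
          rw [Real.sqrt_mul (by positivity), Real.sqrt_sq (by positivity)]
      _ ≤ P⁻¹ * (Real.sqrt (x2 * y2) - Real.sqrt (x1 * y1)) := by
          exact mul_le_mul_of_nonneg_left (sqrt_key hx1 hy1 hx12 hy12) (by positivity)
  have hak : Real.sqrt (x1 * y1) ≤ Real.sqrt (x2 * y2) :=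
    Real.sqrt_le_sqrt (mul_le_mul hx12 hy12 hy1 hx2)
  have hGmem : ∀ τ : ℝ, Real.sqrt (x1 * y1) ≤ τ → τ ≤ Real.sqrt (x2 * y2) →
      τ ∈ Set.Icc 0 L := by
    intro τ h1 h2
    refine ⟨le_trans (Real.sqrt_nonneg _) h1, le_trans h2 ?_⟩
    calc Real.sqrt (x2 * y2) ≤ Real.sqrt (L * L) :=
        Real.sqrt_le_sqrt (mul_le_mul hx2L hy2L hy2 hL0)
      _ = L := Real.sqrt_mul_self hL0
  have hconst : ∀ τ ∈ Set.Icc (Real.sqrt (x1 * y1)) (Real.sqrt (x2 * y2)),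
      2 * P⁻¹ ≤ (1 + Cst * ε) * (2 / (1 - β * τ ^ 2)) := by
    intro τ hτ
    have hτm := hGmem τ hτ.1 hτ.2
    have hQ0 : 0 < 1 - β * τ ^ 2 := denom_pos β hτm.1 hτm.2
    have hτsq1 : x1 * y1 ≤ τ ^ 2 := by
      nlinarith [Real.sq_sqrt (mul_nonneg hx1 hy1), Real.sqrt_nonneg (x1 * y1), hτ.1]
    have hτsq2 : τ ^ 2 ≤ x2 * y2 := by
      nlinarith [Real.sq_sqrt (mul_nonneg hx2 hy2), Real.sqrt_nonneg (x2 * y2), hτ.2,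
        hτm.1]
    have hwτ : |w - τ ^ 2| ≤ x2 * y2 - x1 * y1 := by
      rw [hw]; split <;> rw [abs_le] <;> constructor <;> nlinarith
    have hdiff : x2 * y2 - x1 * y1 ≤ 2 * L * ε := by
      have e0 : x2 * y2 - x1 * y1 = x2 * (y2 - y1) + y1 * (x2 - x1) := by ring
      have e1 : x2 * (y2 - y1) ≤ L * ε := mul_le_mul hx2L hky (by linarith) hL0
      have e2 : y1 * (x2 - x1) ≤ L * ε := mul_le_mul hy1L hkx (by linarith) hL0
      linarith
    have hQP : 1 - β * τ ^ 2 ≤ (1 + Cst * ε) * P := by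
      have h2 : β * (w - τ ^ 2) ≤ |β| * (x2 * y2 - x1 * y1) :=
        calc β * (w - τ ^ 2) ≤ |β * (w - τ ^ 2)| := le_abs_self _
          _ = |β| * |w - τ ^ 2| := abs_mul _ _
          _ ≤ |β| * (x2 * y2 - x1 * y1) :=
              mul_le_mul_of_nonneg_left hwτ (abs_nonneg β)
      have h4 : 2 * L * |β| * ε ≤ Cst * ε * P :=
        calc 2 * L * |β| * ε = 2 * L * |β| / m * ε * m := by field_simp
          _ ≤ Cst * ε * P := by
              rw [hCstdef]
              exact mul_le_mul_of_nonneg_left hPm (by positivity)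
      have h5 : |β| * (x2 * y2 - x1 * y1) ≤ 2 * L * |β| * ε := by
        have := abs_nonneg β
        calc |β| * (x2 * y2 - x1 * y1) ≤ |β| * (2 * L * ε) :=
            mul_le_mul_of_nonneg_left hdiff (abs_nonneg β)
          _ = 2 * L * |β| * ε := by ring
      have h6 : (1 - β * τ ^ 2) - P = β * (w - τ ^ 2) := by rw [hPdef]; ring
      nlinarith
    have hrw : (1 + Cst * ε) * (2 / (1 - β * τ ^ 2))
        = ((1 + Cst * ε) * 2) / (1 - β * τ ^ 2) := by ring
    have hrw2 : 2 * P⁻¹ = 2 / P := by rw [div_eq_mul_inv]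
    rw [hrw, hrw2, div_le_div_iff₀ hP0 hQ0]
    linear_combination 2 * hQP
  calc 2 * Real.sqrt (∫ s in x1..x2, ∫ t in y1..y2, uBeta β (s, t))
      ≤ 2 * (P⁻¹ * (Real.sqrt (x2 * y2) - Real.sqrt (x1 * y1))) := by linarith
    _ = ∫ τ in Real.sqrt (x1 * y1)..Real.sqrt (x2 * y2), 2 * P⁻¹ := by
        rw [intervalIntegral.integral_const, smul_eq_mul]; ring
    _ ≤ ∫ τ in Real.sqrt (x1 * y1)..Real.sqrt (x2 * y2),
          (1 + Cst * ε) * (2 / (1 - β * τ ^ 2)) := by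
        apply intervalIntegral.integral_mono_on hak intervalIntegrable_const _ hconst
        refine (f_intOn β ?_ ?_).const_mul _
        · exact hGmem _ le_rfl hak
        · exact hGmem _ hak le_rfl

set_option maxHeartbeats 1000000 in
/-- Every partition of the box with mesh `≤ ε` has `J̃`-value at most `(1+Cε)` times
the diagonal integral. -/
lemma Jpart_bound (β : ℝ) {n : ℕ} (x y : Fin (n + 1) → ℝ) {ε : ℝ}
    (hmx : Monotone x) (hmy : Monotone y) (hx0 : x 0 = 0) (hy0 : y 0 = 0)
    (hxl : x (Fin.last n) = Lb β) (hyl : y (Fin.last n) = Lb β)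
    (hmesh : ∀ k : Fin n, x k.succ - x k.castSucc ≤ ε ∧ y k.succ - y k.castSucc ≤ ε) :
    Jpart (uBeta β) n x y ≤
      (1 + 2 * Lb β * |β| / mb β * ε) * ∫ t in (0:ℝ)..(Lb β), 2 / (1 - β * t ^ 2) := by
  set L := Lb β with hLdef
  have hL0 : 0 ≤ L := Lb_nonneg β
  have hxmem : ∀ k, x k ∈ Set.Icc 0 L := fun k =>
    ⟨by rw [← hx0]; exact hmx (Fin.zero_le k), by rw [← hxl]; exact hmx (Fin.le_last k)⟩
  have hymem : ∀ k, y k ∈ Set.Icc 0 L := fun k =>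
    ⟨by rw [← hy0]; exact hmy (Fin.zero_le k), by rw [← hyl]; exact hmy (Fin.le_last k)⟩
  set c : ℕ → Fin (n + 1) := fun i => ⟨min i n, by omega⟩ with hc
  set a : ℕ → ℝ := fun i => Real.sqrt (x (c i) * y (c i)) with ha
  have hamem : ∀ i, a i ∈ Set.Icc 0 L := by
    intro i
    refine ⟨Real.sqrt_nonneg _, ?_⟩
    calc Real.sqrt (x (c i) * y (c i)) ≤ Real.sqrt (L * L) :=
        Real.sqrt_le_sqrt (mul_le_mul (hxmem _).2 (hymem _).2 (hymem _).1 hL0)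
      _ = L := Real.sqrt_mul_self hL0
  have hkey : ∀ k : Fin n,
      2 * Real.sqrt (∫ s in (x k.castSucc)..(x k.succ),
          ∫ t in (y k.castSucc)..(y k.succ), uBeta β (s, t))
        ≤ ∫ τ in a (k : ℕ)..a ((k : ℕ) + 1),
            (1 + 2 * L * |β| / mb β * ε) * (2 / (1 - β * τ ^ 2)) := by
    intro k
    have hck : c (k : ℕ) = k.castSucc := by
      apply Fin.ext; simp [hc, Nat.min_eq_left k.isLt.le]
    have hck1 : c ((k : ℕ) + 1) = k.succ := by
      apply Fin.ext; simp [hc, Nat.min_eq_left k.isLt]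
    have haval1 : a (k : ℕ) = Real.sqrt (x k.castSucc * y k.castSucc) := by
      rw [ha]; simp only [hck]
    have haval2 : a ((k : ℕ) + 1) = Real.sqrt (x k.succ * y k.succ) := by
      rw [ha]; simp only [hck1]
    rw [haval1, haval2]
    exact rect_bound β (hxmem k.castSucc).1 (hymem k.castSucc).1
      (hmx (Fin.castSucc_lt_succ : k.castSucc < k.succ).le)
      (hmy (Fin.castSucc_lt_succ : k.castSucc < k.succ).le)
      (hxmem k.succ).2 (hymem k.succ).2 (hmesh k).1 (hmesh k).2
  unfold Jpart
  rw [Finset.mul_sum]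
  have hsum := Finset.sum_le_sum (fun k (_ : k ∈ Finset.univ) => hkey k)
  have hfin : (∑ k : Fin n, ∫ τ in a (k : ℕ)..a ((k : ℕ) + 1),
        (1 + 2 * L * |β| / mb β * ε) * (2 / (1 - β * τ ^ 2)))
      = ∑ i ∈ Finset.range n, ∫ τ in a i..a (i + 1),
        (1 + 2 * L * |β| / mb β * ε) * (2 / (1 - β * τ ^ 2)) :=
    Fin.sum_univ_eq_sum_range
      (fun i => ∫ τ in a i..a (i + 1), (1 + 2 * L * |β| / mb β * ε) * (2 / (1 - β * τ ^ 2))) n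
  have hadj : (∑ i ∈ Finset.range n, ∫ τ in a i..a (i + 1),
        (1 + 2 * L * |β| / mb β * ε) * (2 / (1 - β * τ ^ 2)))
      = ∫ τ in (a 0)..(a n), (1 + 2 * L * |β| / mb β * ε) * (2 / (1 - β * τ ^ 2)) :=
    intervalIntegral.sum_integral_adjacent_intervals
      (fun i _ => (f_intOn β (hamem _) (hamem _)).const_mul _)
  have ha0 : a 0 = 0 := by
    have hc0 : c 0 = 0 := by apply Fin.ext; simp [hc]
    rw [ha]; simp only [hc0, hx0, hy0, mul_zero, Real.sqrt_zero]
  have han : a n = L := by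
    have hcn : c n = Fin.last n := by apply Fin.ext; simp [hc, Fin.last]
    rw [ha]; simp only [hcn, hxl, hyl]
    exact Real.sqrt_mul_self hL0
  have hpull : (∫ τ in (a 0)..(a n), (1 + 2 * L * |β| / mb β * ε) * (2 / (1 - β * τ ^ 2)))
      = (1 + 2 * L * |β| / mb β * ε) * ∫ τ in (0:ℝ)..L, 2 / (1 - β * τ ^ 2) := by
    rw [ha0, han, intervalIntegral.integral_const_mul]
  calc (∑ k : Fin n, 2 * Real.sqrt (∫ s in (x k.castSucc)..(x k.succ),
        ∫ t in (y k.castSucc)..(y k.succ), uBeta β (s, t)))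
      ≤ ∑ k : Fin n, ∫ τ in a (k : ℕ)..a ((k : ℕ) + 1),
          (1 + 2 * L * |β| / mb β * ε) * (2 / (1 - β * τ ^ 2)) := hsum
    _ = (1 + 2 * L * |β| / mb β * ε) * ∫ τ in (0:ℝ)..L, 2 / (1 - β * τ ^ 2) := by
        rw [hfin, hadj, hpull]

/-- On any curve in `B↗` there are partitions of arbitrarily small mesh. -/
lemma exists_partition (β : ℝ) {Υ : Set (ℝ × ℝ)} (hΥ : Υ ∈ Bup 0 (Lb β) 0 (Lb β))
    {ε : ℝ} (hε : 0 < ε) :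
    ∃ (n : ℕ) (x y : Fin (n + 1) → ℝ), IsPartitionOn 0 (Lb β) 0 (Lb β) Υ n x y ∧
      ∀ k : Fin n, x k.succ - x k.castSucc < ε ∧ y k.succ - y k.castSucc < ε := by
  obtain ⟨hsub, hconn, h00, hLL, hmono⟩ := hΥ
  set L := Lb β with hLdef
  have hL0 : 0 < L := Lb_pos β
  obtain ⟨n, hn⟩ := exists_nat_gt (2 * L / ε)
  have hn0 : 0 < (n : ℝ) := lt_trans (by positivity) hn
  have hstep : 2 * L / n < ε := by
    rw [div_lt_iff₀ hn0]
    rw [div_lt_iff₀ hε] at hn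
    linarith
  -- the coordinate-sum map has interval image
  have himg : Set.Icc (0:ℝ) (2 * L) ⊆ (fun p : ℝ × ℝ => p.1 + p.2) '' Υ := by
    have hconn' : IsPreconnected ((fun p : ℝ × ℝ => p.1 + p.2) '' Υ) :=
      (hconn.image _ (Continuous.continuousOn (by fun_prop))).isPreconnected
    have h0 : (0:ℝ) ∈ (fun p : ℝ × ℝ => p.1 + p.2) '' Υ := ⟨(0, 0), h00, by norm_num⟩
    have h2 : 2 * L ∈ (fun p : ℝ × ℝ => p.1 + p.2) '' Υ := ⟨(L, L), hLL, by ring⟩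
    exact hconn'.ordConnected.out h0 h2
  have hbox : ∀ p ∈ Υ, 0 ≤ p.1 ∧ 0 ≤ p.2 ∧ p.1 ≤ L ∧ p.2 ≤ L := by
    intro p hp
    have h := hsub hp
    rw [Set.mem_Icc] at h
    exact ⟨h.1.1, h.1.2, h.2.1, h.2.2⟩
  have hpt : ∀ k : Fin (n + 1), ∃ p : ℝ × ℝ, p ∈ Υ ∧ p.1 + p.2 = 2 * L * k / n := by
    intro k
    have hk : (2 : ℝ) * L * k / n ∈ Set.Icc (0:ℝ) (2 * L) := by
      constructor
      · positivity
      · rw [div_le_iff₀ hn0]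
        have hkn : (k : ℝ) ≤ n := by
          exact_mod_cast Nat.cast_le.2 (Nat.lt_succ_iff.1 k.isLt)
        nlinarith
    obtain ⟨p, hp, he⟩ := himg hk
    exact ⟨p, hp, he⟩
  choose p hpΥ hps using hpt
  -- ordering along the curve
  have hcoord : ∀ k l : Fin (n + 1), (k : ℝ) ≤ (l : ℝ) →
      (p k).1 ≤ (p l).1 ∧ (p k).2 ≤ (p l).2 := by
    intro k l hkl
    have hs : (p k).1 + (p k).2 ≤ (p l).1 + (p l).2 := by
      rw [hps k, hps l]
      gcongr
    have hm := hmono _ (hpΥ k) _ (hpΥ l)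
    constructor
    · by_contra h
      push_neg at h
      nlinarith
    · by_contra h
      push_neg at h
      nlinarith
  refine ⟨n, fun k => (p k).1, fun k => (p k).2, ⟨?_, ?_, ?_, ?_, ?_, ?_, fun k => hpΥ k⟩, ?_⟩
  · intro k l hkl
    exact (hcoord k l (by exact_mod_cast Fin.le_iff_val_le_val.1 hkl)).1
  · intro k l hkl
    exact (hcoord k l (by exact_mod_cast Fin.le_iff_val_le_val.1 hkl)).2
  · have hs := hps 0
    have hb := hbox _ (hpΥ 0)
    simp only [Fin.val_zero, Nat.cast_zero, mul_zero, zero_div] at hs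
    linarith [hb.1, hb.2.1]
  · have hs := hps 0
    have hb := hbox _ (hpΥ 0)
    simp only [Fin.val_zero, Nat.cast_zero, mul_zero, zero_div] at hs
    linarith [hb.1, hb.2.1]
  · have hs := hps (Fin.last n)
    have hb := hbox _ (hpΥ (Fin.last n))
    simp only [Fin.val_last] at hs
    have hn' : (n : ℝ) ≠ 0 := hn0.ne'
    rw [mul_div_assoc, div_self hn', mul_one] at hs
    linarith [hb.2.2.1, hb.2.2.2]
  · have hs := hps (Fin.last n)
    have hb := hbox _ (hpΥ (Fin.last n))
    simp only [Fin.val_last] at hs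
    have hn' : (n : ℝ) ≠ 0 := hn0.ne'
    rw [mul_div_assoc, div_self hn', mul_one] at hs
    linarith [hb.2.2.1, hb.2.2.2]
  · intro k
    have h1 := hps k.castSucc
    have h2 := hps k.succ
    have hcs : ((k.castSucc : Fin (n + 1)) : ℝ) = (k : ℕ) := by norm_cast
    have hsc : ((k.succ : Fin (n + 1)) : ℝ) = (k : ℕ) + 1 := by
      norm_cast
    have hco := hcoord k.castSucc k.succ (by rw [hcs, hsc]; linarith)
    have hsum : (p k.succ).1 + (p k.succ).2 - ((p k.castSucc).1 + (p k.castSucc).2)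
        = 2 * L / n := by
      rw [h1, h2, hcs, hsc]
      field_simp
      ring
    constructor
    · calc (p k.succ).1 - (p k.castSucc).1 ≤ 2 * L / n := by linarith [hco.2]
        _ < ε := hstep
    · calc (p k.succ).2 - (p k.castSucc).2 ≤ 2 * L / n := by linarith [hco.1]
        _ < ε := hstep

end JAux

open JAux

/-- Variational bound: for any `Υ ∈ B↗([0,L(β)]²)`,
`J̃(u_β,Υ) ≤ ∫_0^{L(β)} 2/(1-βt²) dt = 𝓛(β)`. -/
theorem Jcurve_le_calL (β : ℝ) :
    (∀ Υ ∈ Bup 0 (Lb β) 0 (Lb β),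
        Jcurve 0 (Lb β) 0 (Lb β) (uBeta β) Υ ≤ ∫ t in (0 : ℝ)..(Lb β), 2 / (1 - β * t ^ 2)) ∧
      (∫ t in (0 : ℝ)..(Lb β), 2 / (1 - β * t ^ 2)) = calL β := by
  have hL0 : 0 ≤ Lb β := Lb_nonneg β
  have hCI0 : 0 ≤ ∫ t in (0 : ℝ)..(Lb β), 2 / (1 - β * t ^ 2) := by
    apply intervalIntegral.integral_nonneg hL0
    intro τ hτ
    have := denom_pos β hτ.1 hτ.2
    positivity
  constructor
  · intro Υ hΥ
    set CI := ∫ t in (0 : ℝ)..(Lb β), 2 / (1 - β * t ^ 2) with hCIdef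
    unfold Jcurve
    apply Real.iSup_le _ hCI0
    rintro ⟨ε, hε⟩
    apply le_of_forall_pos_le_add
    intro δ hδ
    set Cst := 2 * Lb β * |β| / mb β with hCstdef
    have hCst0 : 0 ≤ Cst := div_nonneg (by positivity) (mb_pos β).le
    set ε' := min ε (δ / (Cst * CI + 1)) with hε'def
    have hd0 : 0 < Cst * CI + 1 := by positivity
    have hε'0 : 0 < ε' := lt_min hε (by positivity)
    obtain ⟨n, x, y, hpart, hmesh⟩ := exists_partition β hΥ hε'0
    have hbdd : BddBelow {r : ℝ | ∃ (n : ℕ) (x y : Fin (n + 1) → ℝ),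
        IsPartitionOn 0 (Lb β) 0 (Lb β) Υ n x y ∧
        (∀ k : Fin n, x k.succ - x k.castSucc < (ε : ℝ) ∧ y k.succ - y k.castSucc < (ε : ℝ)) ∧
        r = Jpart (uBeta β) n x y} := by
      refine ⟨0, ?_⟩
      rintro r ⟨n', x', y', _, _, rfl⟩
      unfold Jpart
      exact mul_nonneg (by norm_num) (Finset.sum_nonneg fun i _ => Real.sqrt_nonneg _)
    have hmem : Jpart (uBeta β) n x y ∈ {r : ℝ | ∃ (n : ℕ) (x y : Fin (n + 1) → ℝ),
        IsPartitionOn 0 (Lb β) 0 (Lb β) Υ n x y ∧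
        (∀ k : Fin n, x k.succ - x k.castSucc < (ε : ℝ) ∧ y k.succ - y k.castSucc < (ε : ℝ)) ∧
        r = Jpart (uBeta β) n x y} := by
      exact ⟨n, x, y, hpart, fun k => ⟨lt_of_lt_of_le (hmesh k).1 (min_le_left _ _),
        lt_of_lt_of_le (hmesh k).2 (min_le_left _ _)⟩, rfl⟩
    obtain ⟨hmx, hmy, hx0, hy0, hxl, hyl, _⟩ := hpart
    have hJ := Jpart_bound β x y hmx hmy hx0 hy0 hxl hyl
      (fun k => ⟨(hmesh k).1.le, (hmesh k).2.le⟩)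
    have h3 : ε' ≤ δ / (Cst * CI + 1) := min_le_right _ _
    have h5 : Cst * (δ / (Cst * CI + 1)) * CI ≤ δ := by
      have heq : Cst * (δ / (Cst * CI + 1)) * CI = δ * (Cst * CI) / (Cst * CI + 1) := by
        ring
      rw [heq, div_le_iff₀ hd0]
      nlinarith
    have h2 : Cst * ε' * CI ≤ δ :=
      le_trans (mul_le_mul_of_nonneg_right
        (mul_le_mul_of_nonneg_left h3 hCst0) hCI0) h5
    calc sInf _ ≤ Jpart (uBeta β) n x y := csInf_le hbdd hmem
      _ ≤ (1 + Cst * ε') * CI := hJ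
      _ = CI + Cst * ε' * CI := by ring
      _ ≤ CI + δ := by linarith
  · rcases lt_trichotomy β 0 with hβ | hβ | hβ
    · -- case β < 0
      set b := Real.sqrt (-β) with hbdef
      have hb0 : 0 < b := Real.sqrt_pos.2 (by linarith)
      have hb2 : b ^ 2 = -β := Real.sq_sqrt (by linarith)
      have hder : ∀ t : ℝ, HasDerivAt (fun u : ℝ => 2 / b * Real.arctan (b * u))
          (2 / (1 - β * t ^ 2)) t := by
        intro t
        have h1 : HasDerivAt (fun u : ℝ => b * u) b t := by
          simpa using (hasDerivAt_id t).const_mul b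
        have h2 := (Real.hasDerivAt_arctan (b * t)).comp t h1
        have h3 := h2.const_mul (2 / b)
        convert h3 using 1
        case e'_4 => rfl
        case e'_5 => rfl
        case e'_8 => rfl
        have heq : 1 - β * t ^ 2 = 1 + (b * t) ^ 2 := by rw [mul_pow, hb2]; ring
        have hden : (0:ℝ) < 1 + (b * t) ^ 2 := by positivity
        rw [heq]
        field_simp
      have hcont : IntervalIntegrable (fun t : ℝ => 2 / (1 - β * t ^ 2)) volume 0 (Lb β) :=
        f_intOn β ⟨le_rfl, hL0⟩ ⟨hL0, le_rfl⟩
      rw [intervalIntegral.integral_eq_sub_of_hasDerivAt (fun t _ => hder t) hcont]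
      rw [mul_zero, Real.arctan_zero, mul_zero, sub_zero]
      unfold calL
      rw [if_neg (by linarith), if_pos hβ]
      have habs : |β| = -β := abs_of_neg hβ
      have hbL2 : (b * Lb β) ^ 2 = Real.exp (-β) - 1 := by
        rw [mul_pow, hb2]
        unfold Lb
        rw [if_neg hβ.ne]
        rw [Real.sq_sqrt ?hq]
        · have hinv : β * β⁻¹ = 1 := mul_inv_cancel₀ hβ.ne
          field_simp
          linear_combination (Real.exp (-β) - 1) * hinv
        case hq =>
          have h1 : 1 ≤ Real.exp (-β) := by
            rw [show (1:ℝ) = Real.exp 0 by simp]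
            exact Real.exp_le_exp.2 (by linarith)
          apply div_nonneg_iff.2
          right
          constructor <;> linarith
      rw [Real.arctan_eq_arcsin]
      have h1 : 1 + (b * Lb β) ^ 2 = Real.exp (-β) := by rw [hbL2]; ring
      have h2 : b * Lb β / Real.sqrt (Real.exp (-β)) = Real.sqrt (1 - Real.exp β) := by
        have hpos : 0 ≤ b * Lb β / Real.sqrt (Real.exp (-β)) := by positivity
        rw [← Real.sqrt_sq hpos]
        congr 1
        rw [div_pow, hbL2, Real.sq_sqrt (Real.exp_pos _).le]
        rw [div_eq_iff (Real.exp_ne_zero _)]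
        have hh : Real.exp β * Real.exp (-β) = 1 := by
          rw [← Real.exp_add]; simp
        linear_combination hh
      rw [habs, h1, h2]
    · -- case β = 0
      subst hβ
      unfold calL Lb
      norm_num
    · -- case β > 0
      set b := Real.sqrt β with hbdef
      have hb0 : 0 < b := Real.sqrt_pos.2 hβ
      have hb2 : b ^ 2 = β := Real.sq_sqrt hβ.le
      have hexplt : Real.exp (-β) < 1 := by
        rw [show (1:ℝ) = Real.exp 0 by simp]
        exact Real.exp_lt_exp.2 (by linarith)
      have hL2 : (b * Lb β) ^ 2 = 1 - Real.exp (-β) := by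
        rw [mul_pow, hb2]
        unfold Lb
        rw [if_neg hβ.ne']
        rw [Real.sq_sqrt (div_nonneg (by linarith) hβ.le)]
        field_simp
      set z := b * Lb β with hz
      have hz0 : 0 ≤ z := by positivity
      have hz1 : z < 1 := by nlinarith [Real.exp_pos (-β)]
      have hder : ∀ t ∈ Set.uIcc (0:ℝ) (Lb β),
          HasDerivAt (fun u : ℝ => 1 / b * (Real.log (1 + b * u) - Real.log (1 - b * u)))
            (2 / (1 - β * t ^ 2)) t := by
        intro t ht
        rw [Set.uIcc_of_le hL0] at ht
        have hbt0 : 0 ≤ b * t := mul_nonneg hb0.le ht.1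
        have hbt1 : b * t < 1 := by
          have h := mul_le_mul_of_nonneg_left ht.2 hb0.le
          calc b * t ≤ b * Lb β := h
            _ = z := rfl
            _ < 1 := hz1
        have h1p : (0:ℝ) < 1 + b * t := by linarith
        have h1m : (0:ℝ) < 1 - b * t := by linarith
        have d1 : HasDerivAt (fun u : ℝ => 1 + b * u) b t := by
          simpa using ((hasDerivAt_id t).const_mul b).const_add 1
        have d2 : HasDerivAt (fun u : ℝ => 1 - b * u) (-b) t := by
          simpa using ((hasDerivAt_id t).const_mul b).const_sub 1
        have l1 := (Real.hasDerivAt_log h1p.ne').comp t d1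
        have l2 := (Real.hasDerivAt_log h1m.ne').comp t d2
        have l3 := (l1.sub l2).const_mul (1 / b)
        convert l3 using 1
        case e'_4 => rfl
        case e'_5 => rfl
        case e'_8 => rfl
        have heq : 1 - β * t ^ 2 = (1 + b * t) * (1 - b * t) := by rw [← hb2]; ring
        rw [heq]
        field_simp
        ring
      have hcont : IntervalIntegrable (fun t : ℝ => 2 / (1 - β * t ^ 2)) volume 0 (Lb β) :=
        f_intOn β ⟨le_rfl, hL0⟩ ⟨hL0, le_rfl⟩
      rw [intervalIntegral.integral_eq_sub_of_hasDerivAt hder hcont]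
      unfold calL
      rw [if_pos hβ]
      have hlz : Real.log (1 - z) = -β - Real.log (1 + z) := by
        have hmul : (1 - z) * (1 + z) = Real.exp (-β) := by nlinarith
        have h2 : Real.log ((1 - z) * (1 + z)) = -β := by rw [hmul, Real.log_exp]
        rw [Real.log_mul (by linarith) (by linarith)] at h2
        linarith
      have hsq : Real.exp (β / 2) ^ 2 = Real.exp β := by
        rw [sq, ← Real.exp_add]
        norm_num
      have hw : Real.sqrt (Real.exp β - 1) = Real.exp (β / 2) * z := by
        rw [← Real.sqrt_sq (show 0 ≤ Real.exp (β / 2) * z by positivity)]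
        congr 1
        rw [mul_pow, hsq, hL2]
        rw [mul_sub, mul_one, ← Real.exp_add]
        norm_num
      have harsinh : Real.arsinh (Real.sqrt (Real.exp β - 1)) = β / 2 + Real.log (1 + z) := by
        rw [Real.arsinh, hw]
        have h1 : 1 + (Real.exp (β / 2) * z) ^ 2 = Real.exp β := by
          rw [mul_pow, hsq, hL2, mul_sub, mul_one, ← Real.exp_add]
          norm_num
        rw [h1, ← Real.exp_half]
        rw [show Real.exp (β / 2) * z + Real.exp (β / 2) = Real.exp (β / 2) * (1 + z) by ring]
        rw [Real.log_mul (Real.exp_ne_zero _) (by linarith), Real.log_exp]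
      rw [harsinh, hlz, ← hz, ← hbdef]
      simp only [mul_zero, add_zero, sub_zero, Real.log_one]
      field_simp
      ring
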